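/- Let μ ∈ ℂ and let x ∈ ℂ with x not lying in the real segment [−2, 2] and x² ≠ μ. Set λ = (x/2)(1 + √(1 − 4/x²)), where √ is the principal complex square root, and let A, B ∈ ℂ satisfy AB = (x² − μ)/(x² − 4). For n ∈ ℤ set yₙ = Aλⁿ + Bλ⁻ⁿ, and assume yₙ ≠ 0 for all n ∈ ℤ. Then the family (μ/(x·yₙ·y_{n+1}))_{n ∈ ℤ} is summable and ∑_{n ∈ ℤ} μ/(x·yₙ·y_{n+1}) = (μ/(x² − μ))·√(1 − 4/x²). -/

import Mathlib

open Filter Topology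

/-- The principal complex square root: the branch with nonnegative real part. -/
noncomputable def csqrt (w : ℂ) : ℂ := w ^ ((1 : ℂ) / 2)

lemma csqrt_mul_self {w : ℂ} (hw : w ≠ 0) : csqrt w * csqrt w = w := by
  rw [csqrt, ← Complex.cpow_add _ _ hw]
  norm_num

lemma csqrt_re_pos {w : ℂ} (hw : w ≠ 0) (harg : Complex.arg w ≠ Real.pi) :
    0 < (csqrt w).re := by
  rw [csqrt, Complex.cpow_def_of_ne_zero hw, Complex.exp_re]
  apply mul_pos (Real.exp_pos _)
  apply Real.cos_pos_of_mem_Ioo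
  have h1 : (Complex.log w * ((1:ℂ)/2)).im = Complex.arg w / 2 := by
    simp [Complex.mul_im, Complex.log_im]
    ring
  rw [h1]
  have h2 := Complex.neg_pi_lt_arg w
  have h3 := lt_of_le_of_ne (Complex.arg_le_pi w) harg
  constructor <;> [skip; skip] <;> linarith [Real.pi_pos]

lemma hasSum_telescope_aux {v r : ℕ → ℂ} {q L M : ℂ} (hq : ‖q‖ < 1)
    (hr : ∀ n, v (n+1) - v n = q ^ n * r n)
    (hrt : Filter.Tendsto r Filter.atTop (nhds M))
    (hv : Filter.Tendsto v Filter.atTop (nhds L)) :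
    HasSum (fun n => v (n+1) - v n) (L - v 0) := by
  obtain ⟨C, hC⟩ : ∃ C, ∀ n, ‖r n‖ ≤ C := by
    obtain ⟨C, hC⟩ := (hrt.norm).bddAbove_range
    exact ⟨C, fun n => hC ⟨n, rfl⟩⟩
  have hs : Summable (fun n => v (n+1) - v n) := by
    apply Summable.of_norm_bounded (g := fun n => C * ‖q‖ ^ n)
      ((summable_geometric_of_lt_one (norm_nonneg q) hq).mul_left C)
    intro n
    rw [hr n, norm_mul, norm_pow, mul_comm]
    exact mul_le_mul_of_nonneg_right (hC n) (by positivity)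
  have h1 := hs.hasSum
  have h2 := h1.tendsto_sum_nat
  have h3 : (fun N => ∑ i ∈ Finset.range N, (v (i+1) - v i)) = fun N => v N - v 0 :=
    funext fun N => Finset.sum_range_sub v N
  rw [h3] at h2
  have h4 : Filter.Tendsto (fun N => v N - v 0) atTop (𝓝 (L - v 0)) := hv.sub_const (v 0)
  rwa [tendsto_nhds_unique h2 h4] at h1

set_option maxHeartbeats 1000000 in
/-- with `x ∉ [−2,2]`, `x² ≠ μ`, `λ = (x/2)(1 + √(1 − 4/x²))`,
`AB = (x² − μ)/(x² − 4)` and `yₙ = Aλⁿ + Bλ⁻ⁿ ≠ 0` for all `n ∈ ℤ`, the family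
`(μ/(x·yₙ·y_{n+1}))_{n ∈ ℤ}` is summable with sum `(μ/(x² − μ))·√(1 − 4/x²)`. -/
theorem hasSum_mu_div_x_y_y_succ (μ x : ℂ)
    (hx : x ∉ (fun r : ℝ => (r : ℂ)) '' Set.Icc (-2 : ℝ) 2) (hxμ : x ^ 2 ≠ μ)
    (lam : ℂ) (hlam : lam = (x / 2) * (1 + csqrt (1 - 4 / x ^ 2)))
    (A B : ℂ) (hAB : A * B = (x ^ 2 - μ) / (x ^ 2 - 4))
    (y : ℤ → ℂ) (hy : ∀ n : ℤ, y n = A * lam ^ n + B * lam⁻¹ ^ n)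
    (hy0 : ∀ n : ℤ, y n ≠ 0) :
    HasSum (fun n : ℤ => μ / (x * y n * y (n + 1)))
      ((μ / (x ^ 2 - μ)) * csqrt (1 - 4 / x ^ 2)) := by
  have hx0 : x ≠ 0 := by
    rintro rfl
    exact hx ⟨0, by norm_num, by norm_num⟩
  have hx4 : x ^ 2 - 4 ≠ 0 := by
    intro h
    have h2 : (x - 2) * (x + 2) = 0 := by linear_combination h
    rcases mul_eq_zero.1 h2 with h3 | h3
    · exact hx ⟨2, by norm_num, by push_cast; linear_combination -h3⟩
    · exact hx ⟨-2, by norm_num, by push_cast; linear_combination -h3⟩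
  have hx20 : x ^ 2 ≠ 0 := pow_ne_zero 2 hx0
  have hw0 : (1 : ℂ) - 4 / x ^ 2 ≠ 0 := by
    intro h
    apply hx4
    field_simp at h
    linear_combination h
  have harg : Complex.arg (1 - 4 / x ^ 2) ≠ Real.pi := by
    intro h
    rw [Complex.arg_eq_pi_iff] at h
    obtain ⟨hre, him⟩ := h
    obtain ⟨t, ht, hwt⟩ : ∃ t : ℝ, t < 0 ∧ (1:ℂ) - 4/x^2 = (t:ℝ) :=
      ⟨_, hre, Complex.ext (Complex.ofReal_re _).symm (him.trans (Complex.ofReal_im _).symm)⟩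
    have h1 : (1:ℝ) - t ≠ 0 := by linarith
    have h2 : x ^ 2 * ((1:ℂ) - (t:ℝ)) = 4 := by
      have h3 := hwt
      field_simp at h3
      linear_combination h3
    have hz : x ^ 2 = ((4/(1-t) : ℝ) : ℂ) := by
      rw [show ((4/(1-t):ℝ):ℂ) = 4 / ((1:ℂ) - (t:ℝ)) by push_cast; ring]
      rw [eq_div_iff (by
        rw [show ((1:ℂ) - (t:ℝ)) = (((1 - t : ℝ)):ℂ) by push_cast; ring]
        exact_mod_cast Complex.ofReal_ne_zero.mpr h1)]
      exact h2
    set r : ℝ := 4/(1-t) with hrdef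
    have hr0 : 0 < r := by
      apply div_pos (by norm_num); linarith
    have hr4 : r < 4 := by
      rw [hrdef, div_lt_iff₀ (by linarith)]; nlinarith
    have hxim : (x ^ 2).im = 0 := by rw [hz]; simp
    have hxre : (x ^ 2).re = r := by rw [hz]; simp
    have hx2re : (x ^ 2).re = x.re ^ 2 - x.im ^ 2 := by
      rw [pow_two, Complex.mul_re]; ring
    have hx2im : (x ^ 2).im = 2 * x.re * x.im := by
      rw [pow_two, Complex.mul_im]; ring
    have hb0 : x.im = 0 := by
      rcases mul_eq_zero.1 (show x.re * x.im = 0 by nlinarith) with h'|h'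
      · exfalso; nlinarith [sq_nonneg x.im]
      · exact h'
    apply hx
    refine ⟨x.re, ⟨by nlinarith [sq_nonneg x.im], by nlinarith [sq_nonneg x.im]⟩, ?_⟩
    exact Complex.ext (Complex.ofReal_re _) ((Complex.ofReal_im _).trans hb0.symm)
  set s : ℂ := csqrt (1 - 4 / x ^ 2) with hsdef
  have hs2 : s * s = 1 - 4 / x ^ 2 := csqrt_mul_self hw0
  have hsre : 0 < s.re := csqrt_re_pos hw0 harg
  have hs0 : s ≠ 0 := fun h => by rw [h] at hsre; simp at hsre
  have hxs : x ^ 2 * (s * s) = x ^ 2 - 4 := by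
    rw [hs2]; field_simp
  have hlam0 : lam ≠ 0 := by
    rw [hlam]
    apply mul_ne_zero (div_ne_zero hx0 two_ne_zero)
    intro h
    have h1 : ((1:ℂ) + s).re = 0 := by rw [h]; simp
    rw [Complex.add_re, Complex.one_re] at h1
    linarith
  have hlaminv : lam⁻¹ = (x / 2) * (1 - s) := by
    apply inv_eq_of_mul_eq_one_right
    rw [hlam]
    field_simp
    linear_combination -hxs
  have habs : 1 < ‖lam‖ := by
    have h2 : ‖1 - s‖ < ‖1 + s‖ := by
      rw [Complex.norm_def, Complex.norm_def]
      apply Real.sqrt_lt_sqrt (Complex.normSq_nonneg _)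
      simp only [Complex.normSq_apply, Complex.add_re, Complex.add_im, Complex.sub_re,
        Complex.sub_im, Complex.one_re, Complex.one_im]
      nlinarith
    have h1 : ‖lam⁻¹‖ < ‖lam‖ := by
      rw [hlaminv, hlam, norm_mul, norm_mul]
      exact mul_lt_mul_of_pos_left h2 (norm_pos_iff.mpr (div_ne_zero hx0 two_ne_zero))
    rw [norm_inv] at h1
    have hpos : 0 < ‖lam‖ := norm_pos_iff.mpr hlam0
    nlinarith [mul_pos hpos hpos, mul_inv_cancel₀ (ne_of_gt hpos)]
  have hAB0 : A * B ≠ 0 := by rw [hAB]; exact div_ne_zero (sub_ne_zero.mpr hxμ) hx4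
  have hA0 : A ≠ 0 := fun h => hAB0 (by rw [h, zero_mul])
  have hB0 : B ≠ 0 := fun h => hAB0 (by rw [h, mul_zero])
  set u : ℤ → ℂ := fun n => A * lam ^ n / y n with hudef
  have hdiff : lam - lam⁻¹ = x * s := by rw [hlaminv, hlam]; ring
  have hkey : ∀ n : ℤ, u (n + 1) - u n = A * B * (x * s) / (y n * y (n + 1)) := by
    intro n
    have hP : lam ^ n ≠ 0 := zpow_ne_zero _ hlam0
    have hyn : y n = A * lam ^ n + B * (lam ^ n)⁻¹ := by rw [hy, inv_zpow]
    have hyn1 : y (n + 1) = A * (lam * lam ^ n) + B * (lam⁻¹ * (lam ^ n)⁻¹) := by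
      rw [hy, inv_zpow, zpow_add₀ hlam0 n 1, zpow_one]
      rw [mul_inv]
      ring
    have hul : u (n + 1) = A * (lam * lam ^ n) / y (n + 1) := by
      rw [hudef]
      simp only
      rw [zpow_add₀ hlam0 n 1, zpow_one]
      ring_nf
    rw [hul]
    show A * (lam * lam ^ n) / y (n+1) - A * lam ^ n / y n = _
    rw [div_sub_div _ _ (hy0 (n+1)) (hy0 n),
      div_eq_div_iff (mul_ne_zero (hy0 (n+1)) (hy0 n)) (mul_ne_zero (hy0 n) (hy0 (n+1)))]
    have hnum : A * (lam * lam ^ n) * y n - A * lam ^ n * y (n + 1) = A * B * (x * s) := by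
      rw [hyn, hyn1]
      have hPinv : lam ^ n * (lam ^ n)⁻¹ = 1 := mul_inv_cancel₀ hP
      linear_combination (A * B * lam - A * B * lam⁻¹) * hPinv + A * B * hdiff
    linear_combination (y n * y (n+1)) * hnum
  have hABxs : A * B * (x * s) * (x * s) = x ^ 2 - μ := by
    rw [hAB, show (x ^ 2 - μ) / (x ^ 2 - 4) * (x * s) * (x * s) = (x ^ 2 - μ) / (x ^ 2 - 4) * (x ^ 2 * (s * s)) by ring, hxs, div_mul_cancel₀ _ hx4]
  have hterm : ∀ n : ℤ, μ / (x * y n * y (n + 1)) = (μ * s / (x ^ 2 - μ)) * (u (n + 1) - u n) := by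
    intro n
    rw [hkey n]
    field_simp [hy0 n, hy0 (n+1), sub_ne_zero.mpr hxμ]
    linear_combination (-μ) * hABxs
  -- geometric setup
  set q : ℂ := lam⁻¹ ^ 2 with hqdef
  have hq0 : q ≠ 0 := pow_ne_zero _ (inv_ne_zero hlam0)
  have hqn : ‖q‖ < 1 := by
    rw [hqdef, norm_pow, norm_inv]
    have : (1:ℝ) < ‖lam‖ := habs
    rw [show ‖lam‖⁻¹ ^ 2 = (‖lam‖⁻¹) * ‖lam‖⁻¹ by ring]
    have h1 : ‖lam‖⁻¹ < 1 := by
      rw [inv_lt_one_iff₀]; right; exact this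
    nlinarith [inv_nonneg.mpr (norm_nonneg lam)]
  have hyk : ∀ k : ℕ, y (k : ℤ) = lam ^ k * (A + B * q ^ k) := by
    intro k
    rw [hy, hqdef, zpow_natCast, zpow_natCast]
    field_simp
    have hl : lam ^ k * lam⁻¹ ^ k = 1 := by rw [← mul_pow, mul_inv_cancel₀ hlam0, one_pow]
    linear_combination (-(B * lam⁻¹ ^ k)) * hl
  have hymk : ∀ k : ℕ, y (-(k : ℤ)) = lam ^ k * (A * q ^ k + B) := by
    intro k
    rw [hy, hqdef, zpow_neg, zpow_neg, zpow_natCast, zpow_natCast, inv_pow, inv_inv]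
    field_simp
    have hl : lam ^ (k * 2) * lam⁻¹ ^ (k * 2) = 1 := by rw [← mul_pow, mul_inv_cancel₀ hlam0, one_pow]
    linear_combination (-A) * hl
  have hDk : ∀ k : ℕ, A + B * q ^ k ≠ 0 := by
    intro k h
    exact hy0 k (by rw [hyk k, h, mul_zero])
  have hEk : ∀ k : ℕ, A * q ^ k + B ≠ 0 := by
    intro k h
    exact hy0 (-(k:ℤ)) (by rw [hymk k, h, mul_zero])
  have hlamk : ∀ k : ℕ, (lam:ℂ) ^ k ≠ 0 := fun k => pow_ne_zero _ hlam0
  have huk : ∀ k : ℕ, u (k : ℤ) = A / (A + B * q ^ k) := by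
    intro k
    rw [hudef]
    simp only
    rw [zpow_natCast, hyk k,
      div_eq_div_iff (mul_ne_zero (hlamk k) (hDk k)) (hDk k)]
    ring
  have humk : ∀ k : ℕ, u (-(k : ℤ)) = A * q ^ k / (A * q ^ k + B) := by
    intro k
    rw [hudef]
    simp only
    rw [zpow_neg, zpow_natCast, hymk k, hqdef,
      div_eq_div_iff (mul_ne_zero (hlamk k) (hEk k)) (hEk k)]
    field_simp
    have hl : lam ^ (k * 2) * lam⁻¹ ^ (k * 2) = 1 := by rw [← mul_pow, mul_inv_cancel₀ hlam0, one_pow]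
    linear_combination (-(A * q ^ k + B)) * hl
  have hq0t : Tendsto (fun k : ℕ => q ^ k) atTop (𝓝 0) :=
    tendsto_pow_atTop_nhds_zero_of_norm_lt_one hqn
  have hDt : Tendsto (fun k : ℕ => A + B * q ^ k) atTop (𝓝 A) := by
    simpa using tendsto_const_nhds.add (hq0t.const_mul B)
  have hDt1 : Tendsto (fun k : ℕ => A + B * q ^ (k+1)) atTop (𝓝 A) := by
    simpa [Function.comp_def] using hDt.comp (tendsto_add_atTop_nat 1)
  have hEt : Tendsto (fun k : ℕ => A * q ^ k + B) atTop (𝓝 B) := by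
    simpa using (hq0t.const_mul A).add tendsto_const_nhds
  have hEt1 : Tendsto (fun k : ℕ => A * q ^ (k+1) + B) atTop (𝓝 B) := by
    simpa [Function.comp_def] using hEt.comp (tendsto_add_atTop_nat 1)
  set v : ℕ → ℂ := fun k => A / (A + B * q ^ k) with hvdef
  set w : ℕ → ℂ := fun k => A * q ^ k / (A * q ^ k + B) with hwdef
  have hvlim : Tendsto v atTop (𝓝 1) := by
    have := (tendsto_const_nhds : Tendsto (fun _ : ℕ => A) atTop (𝓝 A)).div hDt hA0
    rw [div_self hA0] at this
    exact this
  have hposAux : HasSum (fun k : ℕ => v (k+1) - v k) (1 - v 0) :=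
    hasSum_telescope_aux
      (r := fun k => A * B * (1 - q) / ((A + B * q ^ k) * (A + B * q ^ (k+1)))) hqn
      (fun k => by
        rw [hvdef]; simp only
        field_simp [hDk k, hDk (k+1)]
        ring)
      ((tendsto_const_nhds : Tendsto (fun _ : ℕ => A * B * (1 - q)) atTop (𝓝 (A * B * (1 - q)))).div (hDt.mul hDt1) (mul_ne_zero hA0 hA0))
      hvlim
  have hwlim : Tendsto w atTop (𝓝 0) := by
    have := (hq0t.const_mul A).div hEt hB0
    rw [mul_zero, zero_div] at this
    exact this
  have hnegAux : HasSum (fun k : ℕ => w (k+1) - w k) (0 - w 0) :=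
    hasSum_telescope_aux
      (r := fun k => A * B * (q - 1) / ((A * q ^ k + B) * (A * q ^ (k+1) + B))) hqn
      (fun k => by
        rw [hwdef]; simp only
        field_simp [hEk k, hEk (k+1)]
        ring)
      ((tendsto_const_nhds : Tendsto (fun _ : ℕ => A * B * (q - 1)) atTop (𝓝 (A * B * (q - 1)))).div (hEt.mul hEt1) (mul_ne_zero hB0 hB0))
      hwlim
  have hneg' : HasSum (fun k : ℕ => w k - w (k+1)) (w 0) := by
    have h2 := hnegAux.neg
    have h3 : (fun k : ℕ => -(w (k+1) - w k)) = fun k : ℕ => w k - w (k+1) := by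
      funext k; ring
    rw [h3] at h2
    simpa using h2
  have hv0w0 : v 0 = w 0 := by rw [hvdef, hwdef]; simp
  have hsum1 : HasSum (fun n : ℤ => u (n+1) - u n) 1 := by
    have hpos : HasSum (fun k : ℕ => (fun n : ℤ => u (n+1) - u n) (k : ℤ)) (1 - v 0) := by
      have heq : (fun k : ℕ => (fun n : ℤ => u (n+1) - u n) (k : ℤ))
          = fun k : ℕ => v (k+1) - v k := by
        funext k
        simp only
        rw [show ((k:ℤ)+1) = ((k+1:ℕ):ℤ) by push_cast; ring, huk, huk]
      rw [heq]; exact hposAux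
    have hneg : HasSum (fun k : ℕ => (fun n : ℤ => u (n+1) - u n) (-((k : ℤ)+1))) (v 0) := by
      have heq : (fun k : ℕ => (fun n : ℤ => u (n+1) - u n) (-((k : ℤ)+1)))
          = fun k : ℕ => w k - w (k+1) := by
        funext k
        simp only
        rw [show (-((k:ℤ)+1)+1) = -(k:ℤ) by ring, show (-((k:ℤ)+1)) = -(((k+1:ℕ)):ℤ) by
          push_cast; ring, humk, humk]
      rw [heq, hv0w0]; exact hneg'
    have := HasSum.of_nat_of_neg_add_one (f := fun n : ℤ => u (n+1) - u n) hpos hneg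
    rwa [sub_add_cancel] at this
  have hfinal := hsum1.mul_left (μ * s / (x ^ 2 - μ))
  rw [mul_one] at hfinal
  have hfun : (fun n : ℤ => μ / (x * y n * y (n + 1)))
      = fun n : ℤ => (μ * s / (x ^ 2 - μ)) * (u (n+1) - u n) := funext hterm
  rw [hfun, show μ / (x ^ 2 - μ) * s = μ * s / (x ^ 2 - μ) from by ring]
  exact hfinal
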